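/- arXiv:math/0703868 — 6 statements merged into one kernel-verified Lean document; each statement's English description precedes it below -/
import Mathlib

section
/- Let $d \geq 3$ and let $t_n$ denote the number of spanning trees of the wired $d$-regular tree of height $n$. If the sequence satisfies $t_n = t_{n-1}^{d-1} + (d-1)^{n-1} \prod_{k=1}^{n-1} t_k^{d-2}$ for all $n \geq 2$ (with $t_1 = 1$), then for all $n \geq 4$, $t_n = t_{n-1}^{d-2}(d\, t_{n-1} - (d-1) t_{n-2}^{d-1})$. -/
/-- Lemma 1.1: the spanning tree count of the wired `d`-regular tree of height `n`
satisfies `t n = t (n-1)^(d-2) * (d * t (n-1) - (d-1) * t (n-2)^(d-1))` for `n ≥ 4`. -/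
theorem stmt_0 (d : ℕ) (hd : 3 ≤ d) (t : ℕ → ℤ)
    (hpos : ∀ n, 1 ≤ n → 0 < t n) (h1 : t 1 = 1)
    (hrec : ∀ n, 2 ≤ n →
      t n = t (n-1) ^ (d-1) + (d-1 : ℤ) ^ (n-1) * ∏ k ∈ Finset.Icc 1 (n-1), t k ^ (d-2)) :
    ∀ n, 4 ≤ n →
      t n = t (n-1) ^ (d-2) * ((d : ℤ) * t (n-1) - (d-1 : ℤ) * t (n-2) ^ (d-1)) := by
  intro n hn
  have h3 : n - 1 - 1 = n - 2 := by omega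
  have hA := hrec n (by omega)
  have hB := hrec (n-1) (by omega)
  rw [h3] at hB
  have hsplit : ∏ k ∈ Finset.Icc 1 (n-1), t k ^ (d-2) =
      (∏ k ∈ Finset.Icc 1 (n-2), t k ^ (d-2)) * t (n-1) ^ (d-2) := by
    have hn1 : n - 1 = (n-2) + 1 := by omega
    rw [hn1, Finset.prod_Icc_succ_top (by omega)]
  have hpow : ((d:ℤ)-1) ^ (n-1) = ((d:ℤ)-1) * ((d:ℤ)-1) ^ (n-2) := by
    have hn1 : n - 1 = (n-2) + 1 := by omega
    rw [hn1, pow_succ]; ring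
  have hP : ((d:ℤ)-1) ^ (n-2) * ∏ k ∈ Finset.Icc 1 (n-2), t k ^ (d-2)
      = t (n-1) - t (n-2) ^ (d-1) := by linarith [hB]
  have hpow2 : t (n-1) ^ (d-1) = t (n-1) ^ (d-2) * t (n-1) := by
    have hd1 : d - 1 = (d-2) + 1 := by omega
    rw [hd1, pow_succ]
  rw [hA, hsplit, hpow]
  linear_combination hpow2 + ((d:ℤ)-1) * t (n-1) ^ (d-2) * hP
end

section
/- Let $a \geq 2$ and define $t_1 = 1$ and $t_n = t_{n-1}^{a} + a^{n-1} \prod_{k=1}^{n-1} t_k^{a-1}$ for $n \geq 2$. Then for all $n \geq 2$, $t_n = (1 + a + \cdots + a^{n-1}) \prod_{k=1}^{n-2} (1 + a + \cdots + a^k)^{a^{n-2-k}(a-1)}$. -/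
open Finset

private def qq (a m : ℕ) : ℕ := ∑ i ∈ range m, a ^ i

private def FF (a n : ℕ) : ℕ :=
  qq a n * ∏ k ∈ Icc 1 (n-2), qq a (k+1) ^ (a ^ (n-2-k) * (a-1))

private def GG (a n : ℕ) : ℕ := ∏ j ∈ Icc 2 n, qq a j ^ a ^ (n - j)

private lemma qq_succ (a n : ℕ) : qq a (n+1) = qq a n + a ^ n := sum_range_succ _ _

private lemma F_reindex (a n : ℕ) (hn : 1 ≤ n) :
    FF a (n+1) = qq a (n+1) * ∏ j ∈ Icc 2 n, qq a j ^ (a ^ (n-j) * (a-1)) := by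
  unfold FF
  congr 1
  have h : Icc 2 n = (Icc 1 (n-1)).map (addRightEmbedding 1) := by
    rw [Finset.map_add_right_Icc, Nat.sub_add_cancel hn]
  rw [h, Finset.prod_map]
  apply Finset.prod_congr rfl
  intro k hk
  simp only [addRightEmbedding_apply]
  have h2 : n + 1 - 2 - k = n - (k+1) := by omega
  rw [h2]

private lemma L1 (a : ℕ) (ha : 2 ≤ a) : ∀ n, 1 ≤ n →
    FF a (n+1) = FF a n ^ a + a ^ n * GG a n ^ (a-1) := by
  intro n hn
  rcases Nat.lt_or_ge n 2 with h | h
  · interval_cases n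
    have h10 : Finset.Icc 1 0 = (∅ : Finset ℕ) := by decide
    have h21 : Finset.Icc 2 1 = (∅ : Finset ℕ) := by decide
    simp [FF, GG, qq, h10, h21, Finset.sum_range_succ]
  · obtain ⟨m, rfl⟩ : ∃ m, n = m + 1 := ⟨n-1, by omega⟩
    have hm : 1 ≤ m := by omega
    set P := ∏ j ∈ Icc 2 m, qq a j ^ (a ^ (m+1-j) * (a-1)) with hP
    have hFtop : FF a (m+2) = qq a (m+2) * qq a (m+1) ^ (a-1) * P := by
      rw [F_reindex a (m+1) (by omega)]
      rw [Finset.prod_Icc_succ_top (by omega : 2 ≤ m+1)]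
      rw [Nat.sub_self, pow_zero, one_mul]
      ring
    have hFa : FF a (m+1) ^ a = qq a (m+1) ^ a * P := by
      rw [F_reindex a m hm, mul_pow, ← Finset.prod_pow]
      congr 1
      apply Finset.prod_congr rfl
      intro j hj
      rw [← pow_mul]
      congr 1
      have hj' : j ≤ m := (Finset.mem_Icc.mp hj).2
      have h3 : m+1-j = (m-j)+1 := by omega
      rw [h3, pow_succ]
      ring
    have hG : GG a (m+1) ^ (a-1) = qq a (m+1) ^ (a-1) * P := by
      unfold GG
      rw [Finset.prod_Icc_succ_top (by omega : 2 ≤ m+1), Nat.sub_self, pow_zero,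
        pow_one, mul_pow, ← Finset.prod_pow, mul_comm]
      congr 1
      apply Finset.prod_congr rfl
      intro j hj
      rw [← pow_mul]
    have hsplit : ∀ x : ℕ, x ^ a = x ^ (a-1) * x := by
      intro x
      conv_lhs => rw [show a = (a-1)+1 by omega]
      rw [pow_succ]
    rw [hFtop, hFa, hG, qq_succ a (m+1), hsplit]
    ring

private lemma L2 (a n : ℕ) (ha : 2 ≤ a) (hn : 1 ≤ n) :
    GG a n * FF a (n+1) = GG a (n+1) := by
  rw [F_reindex a n hn]
  unfold GG
  rw [Finset.prod_Icc_succ_top (by omega : 2 ≤ n+1), Nat.sub_self, pow_zero, pow_one]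
  have key : (∏ j ∈ Icc 2 n, qq a j ^ a^(n-j)) * (∏ j ∈ Icc 2 n, qq a j ^ (a^(n-j)*(a-1)))
      = ∏ j ∈ Icc 2 n, qq a j ^ a^(n+1-j) := by
    rw [← Finset.prod_mul_distrib]
    apply Finset.prod_congr rfl
    intro j hj
    rw [← pow_add]
    congr 1
    have hj' : j ≤ n := (Finset.mem_Icc.mp hj).2
    have h3 : n+1-j = (n-j)+1 := by omega
    rw [h3, pow_succ]
    obtain ⟨b, rfl⟩ : ∃ b, a = b+1 := ⟨a-1, by omega⟩
    simp only [Nat.add_sub_cancel]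
    ring
  rw [← key]
  ring

/-- Product formula (2): `t n = q n * ∏_{k=1}^{n-2} q (k+1) ^ (a^(n-2-k)(a-1))`,
where `q m = 1 + a + ... + a^(m-1)`. -/
theorem stmt_1 (a : ℕ) (ha : 2 ≤ a) (t : ℕ → ℕ)
    (h1 : t 1 = 1)
    (hrec : ∀ n, 2 ≤ n →
      t n = t (n-1) ^ a + a ^ (n-1) * ∏ k ∈ Finset.Icc 1 (n-1), t k ^ (a-1)) :
    ∀ n, 2 ≤ n →
      t n = (∑ i ∈ Finset.range n, a ^ i) *
        ∏ k ∈ Finset.Icc 1 (n-2), (∑ i ∈ Finset.range (k+1), a ^ i) ^ (a ^ (n-2-k) * (a-1)) := by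
  have key : ∀ n, 1 ≤ n → t n = FF a n ∧ (∏ k ∈ Finset.Icc 1 n, t k) = GG a n := by
    intro n hn
    induction n, hn using Nat.le_induction with
    | base =>
      have h10 : Finset.Icc 1 0 = (∅ : Finset ℕ) := by decide
      have h21 : Finset.Icc 2 1 = (∅ : Finset ℕ) := by decide
      constructor
      · simp [FF, qq, h1, h10]
      · simp [GG, h1, h21]
    | succ n hn ih =>
      have ht : t (n+1) = FF a (n+1) := by
        rw [hrec (n+1) (by omega)]
        simp only [Nat.add_sub_cancel]
        rw [Finset.prod_pow, ih.2, ih.1]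
        exact (L1 a ha n hn).symm
      refine ⟨ht, ?_⟩
      rw [Finset.prod_Icc_succ_top (by omega : 1 ≤ n+1), ih.2, ht]
      exact L2 a n ha hn
  intro n hn
  rw [(key n (by omega)).1]
  simp only [FF, qq]
end

section
/- For integers $a \geq 2$ and $n \geq 2$, the product $\left(\prod_{k=1}^{n-2}(1+a+\cdots+a^k)^{a^{n-2-k}(a-1)}\right) \cdot (1+a+\cdots+a^{n-1})$ satisfies the recurrence: for $n \geq 4$ it equals $P_{n-1}^{a-1}\,((a+1) P_{n-1} - a\, P_{n-2}^{a})$, where $P_m$ denotes the corresponding product for height $m$. -/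
/-- The closed-form product `P n` satisfies the recurrence
`P n = P (n-1)^(a-1) * ((a+1) P (n-1) - a P (n-2)^a)` for `n ≥ 4`. -/
theorem stmt_2 (a : ℕ) (ha : 2 ≤ a) (P : ℕ → ℤ)
    (hP : ∀ m, 2 ≤ m →
      P m = (∏ k ∈ Finset.Icc 1 (m-2),
          ((∑ i ∈ Finset.range (k+1), (a : ℤ) ^ i) ^ (a ^ (m-2-k) * (a-1)))) *
        (∑ i ∈ Finset.range m, (a : ℤ) ^ i)) :
    ∀ n, 4 ≤ n →
      P n = P (n-1) ^ (a-1) * (((a : ℤ)+1) * P (n-1) - (a : ℤ) * P (n-2) ^ a) := by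
  intro n hn
  obtain ⟨m, rfl⟩ : ∃ m, n = m + 4 := ⟨n - 4, by omega⟩
  set S : ℕ → ℤ := fun k => ∑ i ∈ Finset.range (k+1), (a:ℤ)^i with hS
  -- raising a product to the a-th power shifts all exponents
  have key : ∀ N, (∏ k ∈ Finset.Icc 1 N, S k ^ (a^(N-k)*(a-1)))^a
      = ∏ k ∈ Finset.Icc 1 N, S k ^ (a^(N+1-k)*(a-1)) := by
    intro N
    rw [← Finset.prod_pow]
    apply Finset.prod_congr rfl
    intro k hk
    rw [← pow_mul]
    congr 1
    have hk' : k ≤ N := (Finset.mem_Icc.mp hk).2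
    have h1 : N+1-k = (N-k)+1 := by omega
    rw [h1, pow_succ]
    ring
  -- splitting off the top term of the product
  have top : ∀ N, ∏ k ∈ Finset.Icc 1 (N+1), S k ^ (a^(N+1-k)*(a-1))
      = (∏ k ∈ Finset.Icc 1 N, S k ^ (a^(N+1-k)*(a-1))) * S (N+1) ^ (a-1) := by
    intro N
    rw [Finset.prod_Icc_succ_top (by omega : 1 ≤ N+1)]
    congr 1
    simp
  -- geometric sum recurrence
  have geo : ∀ N, S (N+1) = (a:ℤ) * S N + 1 := by
    intro N
    simp only [hS]
    exact geom_sum_succ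
  have hPn := hP (m+4) (by omega)
  have hPn1 := hP (m+3) (by omega)
  have hPn2 := hP (m+2) (by omega)
  have e1 : m+4-1 = m+3 := by omega
  have e2 : m+4-2 = m+2 := by omega
  have e3 : m+3-2 = m+1 := by omega
  have e4 : m+2-2 = m := by omega
  rw [e2] at hPn
  rw [e3] at hPn1
  rw [e4] at hPn2
  have eS3 : ∑ i ∈ Finset.range (m+4), (a:ℤ)^i = S (m+3) := by
    have : m+4 = (m+3)+1 := by omega
    rw [this]
  have eS2 : ∑ i ∈ Finset.range (m+3), (a:ℤ)^i = S (m+2) := by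
    have : m+3 = (m+2)+1 := by omega
    rw [this]
  have eS1 : ∑ i ∈ Finset.range (m+2), (a:ℤ)^i = S (m+1) := by
    have : m+2 = (m+1)+1 := by omega
    rw [this]
  rw [eS3] at hPn; rw [eS2] at hPn1; rw [eS1] at hPn2
  set A : ℤ := ∏ k ∈ Finset.Icc 1 (m+1), S k ^ (a^(m+1-k)*(a-1)) with hA
  -- P(m+3) = A * S(m+2)
  have h1 : P (m+3) = A * S (m+2) := hPn1
  -- P(m+2)^a = A * S(m+1)
  have h2 : P (m+2) ^ a = A * S (m+1) := by
    rw [hPn2, mul_pow, key m, hA, top m]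
    have : S (m+1) ^ a = S (m+1) ^ (a-1) * S (m+1) := by
      rw [← pow_succ]
      congr 1
      omega
    rw [this]
    ring
  -- P(m+4) = A^a * S(m+2)^(a-1) * S(m+3)
  have h3 : P (m+4) = A^a * S (m+2) ^ (a-1) * S (m+3) := by
    rw [hPn, top (m+1), ← key (m+1)]
  -- geometric identity
  have hgeo : ((a:ℤ)+1) * S (m+2) - (a:ℤ) * S (m+1) = S (m+3) := by
    have g1 := geo (m+1)
    have g2 := geo (m+2)
    rw [g2]
    linarith
  rw [e1, e2, h1, h2, h3]
  have hAa : A ^ a = A ^ (a-1) * A := by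
    rw [← pow_succ]
    congr 1
    omega
  rw [hAa, mul_pow, ← hgeo]
  ring
end

section
/- Let $a \geq 2$ and define groups $H_n$ recursively by $H_2 = 0$ and $H_n = H_{n-1}^{\oplus a} \oplus \mathbb{Z}_{q_{n-1}}^{\oplus (a-1)}$ for $n \geq 3$, where $q_k = 1+a+\cdots+a^{k-1}$. Then $H_n \cong \mathbb{Z}_{q_{n-1}}^{a-1} \oplus \mathbb{Z}_{q_{n-2}}^{a(a-1)} \oplus \cdots \oplus \mathbb{Z}_{q_2}^{a^{n-3}(a-1)}$ for all $n \geq 2$. -/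
private def eqvZero {M N : Type*} [AddCommMonoid M] [AddCommMonoid N]
    [Subsingleton M] [Subsingleton N] : M ≃+ N where
  toFun _ := 0
  invFun _ := 0
  left_inv _ := Subsingleton.elim _ _
  right_inv _ := Subsingleton.elim _ _
  map_add' _ _ := Subsingleton.elim _ _

private def eqvArrow {α β M : Type*} [AddCommMonoid M] (e : α ≃ β) :
    (α → M) ≃+ (β → M) :=
  { Equiv.arrowCongr e (Equiv.refl M) with map_add' := fun _ _ => rfl }

private def eqvCurry (α β M : Type*) [AddCommMonoid M] :
    (α × β → M) ≃+ (α → β → M) :=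
  { Equiv.curry α β M with map_add' := fun _ _ => rfl }

private def eqvPiComm {ι κ : Type*} (M : ι → Type*) [∀ i, AddCommMonoid (M i)] :
    (κ → ∀ i, M i) ≃+ ∀ i, κ → M i :=
  { Equiv.piComm (fun (_ : κ) (i : ι) => M i) with map_add' := fun _ _ => rfl }

private def eqvSnoc {n : ℕ} (M : Fin (n+1) → Type*) [∀ i, AddCommMonoid (M i)] :
    (∀ i, M i) ≃+ (∀ i : Fin n, M i.castSucc) × M (Fin.last n) where
  toFun f := (fun i => f i.castSucc, f (Fin.last n))
  invFun p := Fin.snoc p.1 p.2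
  left_inv f := funext fun i =>
    Fin.lastCases (Fin.snoc_last _ _) (fun i => Fin.snoc_castSucc _ _ i) i
  right_inv p := by
    refine Prod.ext (funext fun i => ?_) ?_
    · exact Fin.snoc_castSucc _ _ i
    · exact Fin.snoc_last _ _
  map_add' f g := rfl

/-- The recursively defined groups `H_2 = 0`, `H_n = H_{n-1}^a ⊕ Z_{q_{n-1}}^{a-1}`
satisfy `H_n ≅ Z_{q_{n-1}}^{a-1} ⊕ Z_{q_{n-2}}^{a(a-1)} ⊕ ⋯ ⊕ Z_{q_2}^{a^{n-3}(a-1)}`. -/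
theorem stmt_6 (a : ℕ) (ha : 2 ≤ a)
    (q : ℕ → ℕ) (hq : ∀ k, q k = ∑ i ∈ Finset.range k, a ^ i)
    (H : ℕ → Type) (inst : ∀ n, AddCommGroup (H n))
    (h2 : Subsingleton (H 2))
    (hrec : ∀ n, 3 ≤ n →
      Nonempty (H n ≃+ (Fin a → H (n-1)) × (Fin (a-1) → ZMod (q (n-1))))) :
    ∀ n, 2 ≤ n →
      Nonempty (H n ≃+
        ((k : Fin n) → Fin (if 2 ≤ (k : ℕ) ∧ (k : ℕ) ≤ n - 1
            then a ^ (n - 1 - (k : ℕ)) * (a - 1) else 0) → ZMod (q (k : ℕ)))) := by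
  intro n hn
  induction n, hn using Nat.le_induction with
  | base =>
    have hk : ∀ k : Fin 2, IsEmpty (Fin (if 2 ≤ (k : ℕ) ∧ (k : ℕ) ≤ 2 - 1
        then a ^ (2 - 1 - (k : ℕ)) * (a - 1) else 0)) := by
      intro k
      have h : (if 2 ≤ (k : ℕ) ∧ (k : ℕ) ≤ 2 - 1
          then a ^ (2 - 1 - (k : ℕ)) * (a - 1) else 0) = 0 := by
        have := k.isLt; rw [if_neg]; omega
      rw [h]; infer_instance
    haveI : Subsingleton ((k : Fin 2) → Fin (if 2 ≤ (k : ℕ) ∧ (k : ℕ) ≤ 2 - 1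
        then a ^ (2 - 1 - (k : ℕ)) * (a - 1) else 0) → ZMod (q (k : ℕ))) :=
      ⟨fun f g => funext fun k => funext fun x => (((hk k).false x).elim)⟩
    exact ⟨eqvZero⟩
  | succ n hn ih =>
    obtain ⟨e1⟩ := hrec (n+1) (by omega)
    obtain ⟨e0⟩ := ih
    -- coefficients
    set c1 : ℕ → ℕ := fun k => if 2 ≤ k ∧ k ≤ n - 1 then a ^ (n - 1 - k) * (a - 1) else 0 with hc1
    set c2 : ℕ → ℕ := fun k => if 2 ≤ k ∧ k ≤ n then a ^ (n - k) * (a - 1) else 0 with hc2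
    have hmul : ∀ k : Fin n, a * c1 (k : ℕ) = c2 (k : ℕ) := by
      intro k
      have hk := k.isLt
      simp only [hc1, hc2]
      by_cases h : 2 ≤ (k : ℕ)
      · rw [if_pos, if_pos]
        · have h3 : n - (k : ℕ) = (n - 1 - (k : ℕ)) + 1 := by omega
          rw [h3, pow_succ]; ring
        · exact ⟨h, by omega⟩
        · exact ⟨h, by omega⟩
      · rw [if_neg (by tauto), if_neg (by tauto), mul_zero]
    have hlast : a - 1 = c2 n := by
      simp [hc2, hn]
    -- the chain
    let e2 : H (n+1) ≃+
        (Fin a → ((k : Fin n) → Fin (c1 (k : ℕ)) → ZMod (q (k : ℕ)))) ×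
          (Fin (a-1) → ZMod (q n)) :=
      e1.trans (AddEquiv.prodCongr (AddEquiv.piCongrRight fun _ => e0) (AddEquiv.refl _))
    let e3 : (Fin a → ((k : Fin n) → Fin (c1 (k : ℕ)) → ZMod (q (k : ℕ)))) ≃+
        ((k : Fin n) → Fin a → Fin (c1 (k : ℕ)) → ZMod (q (k : ℕ))) :=
      eqvPiComm _
    let e4 : ((k : Fin n) → Fin a → Fin (c1 (k : ℕ)) → ZMod (q (k : ℕ))) ≃+
        ((k : Fin n) → Fin (c2 (k : ℕ)) → ZMod (q (k : ℕ))) :=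
      AddEquiv.piCongrRight fun k =>
        (eqvCurry _ _ _).symm.trans (eqvArrow (finProdFinEquiv.trans (finCongr (hmul k))))
    let e5 : (Fin (a-1) → ZMod (q n)) ≃+ (Fin (c2 n) → ZMod (q n)) :=
      eqvArrow (finCongr hlast)
    let M : Fin (n+1) → Type := fun k => Fin (c2 (k : ℕ)) → ZMod (q (k : ℕ))
    let e6 : (∀ k, M k) ≃+ ((k : Fin n) → M k.castSucc) × M (Fin.last n) := eqvSnoc M
    exact ⟨e2.trans ((AddEquiv.prodCongr (e3.trans e4) e5).trans e6.symm)⟩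
end

section
/- Let $d \geq 3$, $a = d-1$, and $p$ a prime not dividing $d(d-1)$. Let $t_p$ be the least positive integer $n$ with $p \mid q_n$, where $q_n = 1 + a + \cdots + a^{n-1}$. Define $G = \mathbb{Z}_{q_{n+1}}^{a} \oplus \bigoplus_{k=2}^{n} \mathbb{Z}_{q_k}^{(a-1)a^{n-k}(a+1)}$. Then the rank of the Sylow $p$-subgroup of $G$ equals $d(d-2)\sum_{m < n,\ m \equiv n \pmod{t_p}} (d-1)^m$ if $n \not\equiv -1 \pmod{t_p}$, and equals $d(d-2)\sum_{m < n,\ m \equiv n \pmod{t_p}} (d-1)^m + (d-1)$ if $n \equiv -1 \pmod{t_p}$, where the sums range over $0 \leq m \leq n-2$ with $m \equiv n \pmod{t_p}$. -/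
section aux

/-- torsion of a product -/
def torsProd {A B : Type*} [AddMonoid A] [AddMonoid B] (p : ℕ) :
    {x : A × B // p • x = 0} ≃ {y : A // p • y = 0} × {z : B // p • z = 0} where
  toFun x := (⟨x.1.1, congrArg Prod.fst x.2⟩, ⟨x.1.2, congrArg Prod.snd x.2⟩)
  invFun y := ⟨(y.1.1, y.2.1), Prod.ext y.1.2 y.2.2⟩
  left_inv _ := rfl
  right_inv _ := rfl

/-- torsion of a pi type -/
def torsPi {ι : Type*} {M : ι → Type*} [∀ i, AddMonoid (M i)] (p : ℕ) :
    {f : ∀ i, M i // p • f = 0} ≃ ∀ i, {x : M i // p • x = 0} where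
  toFun f i := ⟨f.1 i, congrFun f.2 i⟩
  invFun g := ⟨fun i => (g i).1, funext fun i => (g i).2⟩
  left_inv _ := rfl
  right_inv _ := rfl

lemma tors_card (p m : ℕ) (hp : p.Prime) (hm : 0 < m) :
    Nat.card {x : ZMod m // p • x = 0} = if p ∣ m then p else 1 := by
  haveI : NeZero m := ⟨hm.ne'⟩
  by_cases h : p ∣ m
  · rw [if_pos h]
    have hc : 0 < m / p := Nat.div_pos (Nat.le_of_dvd hm h) hp.pos
    have key : ∀ y : ZMod p, p • ((m / p * y.val : ℕ) : ZMod m) = 0 := by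
      intro y
      have : p • ((m / p * y.val : ℕ) : ZMod m) = ((p * (m / p * y.val) : ℕ) : ZMod m) := by
        push_cast; ring
      rw [this, ← mul_assoc, Nat.mul_div_cancel' h, Nat.cast_mul, ZMod.natCast_self, zero_mul]
    haveI : NeZero p := ⟨hp.pos.ne'⟩
    have e : ZMod p ≃ {x : ZMod m // p • x = 0} := by
      refine Equiv.ofBijective (fun y => ⟨((m / p * y.val : ℕ) : ZMod m), key y⟩) ⟨?_, ?_⟩
      · intro y1 y2 hy
        have h1 : m / p * y1.val < m := by
          calc m / p * y1.val < m / p * p := (mul_lt_mul_iff_right₀ hc).mpr (ZMod.val_lt y1)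
          _ = m := Nat.div_mul_cancel h
        have h2 : m / p * y2.val < m := by
          calc m / p * y2.val < m / p * p := (mul_lt_mul_iff_right₀ hc).mpr (ZMod.val_lt y2)
          _ = m := Nat.div_mul_cancel h
        have := congrArg ZMod.val (congrArg Subtype.val hy)
        rw [ZMod.val_cast_of_lt h1, ZMod.val_cast_of_lt h2] at this
        have := Nat.eq_of_mul_eq_mul_left hc this
        exact ZMod.val_injective p this
      · rintro ⟨x, hx⟩
        have hx' : (↑(p * x.val) : ZMod m) = 0 := by
          rw [Nat.cast_mul, ZMod.natCast_val, ZMod.cast_id]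
          simpa [nsmul_eq_mul] using hx
        rw [ZMod.natCast_eq_zero_iff] at hx'
        have hcd : m / p ∣ x.val := by
          rcases hx' with ⟨s, hs⟩
          refine ⟨s, ?_⟩
          have hps : p * x.val = p * (m / p * s) := by
            rw [hs, ← mul_assoc, Nat.mul_div_cancel' h]
          exact Nat.eq_of_mul_eq_mul_left hp.pos hps
        have hlt : x.val / (m / p) < p := by
          rw [Nat.div_lt_iff_lt_mul hc, mul_comm]
          calc x.val < m := ZMod.val_lt x
          _ = m / p * p := (Nat.div_mul_cancel h).symm
        refine ⟨((x.val / (m / p) : ℕ) : ZMod p), ?_⟩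
        apply Subtype.ext
        show ((m / p * (((x.val / (m / p) : ℕ) : ZMod p)).val : ℕ) : ZMod m) = x
        rw [ZMod.val_cast_of_lt hlt, Nat.mul_div_cancel' hcd, ZMod.natCast_val, ZMod.cast_id]
    rw [← Nat.card_congr e, Nat.card_zmod]
  · rw [if_neg h]
    have hu : IsUnit (p : ZMod m) := by
      rw [ZMod.isUnit_iff_coprime]
      exact (Nat.Prime.coprime_iff_not_dvd hp).mpr h
    haveI : Unique {x : ZMod m // p • x = 0} := by
      refine ⟨⟨0, by simp⟩, ?_⟩
      rintro ⟨x, hx⟩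
      apply Subtype.ext
      rw [nsmul_eq_mul] at hx
      simpa using hu.mul_right_eq_zero.mp hx
    exact Nat.card_unique

end aux

/-- Toumpakari's conjecture: the rank of the Sylow `p`-subgroup of
`G = Z_{q_{n+1}}^a ⊕ ⊕_{k=2}^n Z_{q_k}^{(a-1)a^{n-k}(a+1)}` (measured via the
cardinality of the `p`-torsion) is `d(d-2) ∑_{m<n, m ≡ n (t_p)} (d-1)^m`, plus an
extra `d-1` when `n ≡ -1 (mod t_p)`. -/
theorem stmt_10 (d n p : ℕ) (hd : 3 ≤ d) (hn : 1 ≤ n) (hp : p.Prime)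
    (a : ℕ) (hA : a = d - 1) (hpd : ¬ p ∣ d * (d - 1))
    (q : ℕ → ℕ) (hq : ∀ k, q k = ∑ i ∈ Finset.range k, a ^ i)
    (t : ℕ) (ht : 0 < t ∧ p ∣ q t ∧ ∀ k, 0 < k → p ∣ q k → t ≤ k) :
    Nat.card {x : (Fin a → ZMod (q (n+1))) ×
        ((k : Fin (n+1)) → Fin (if 2 ≤ (k : ℕ)
            then (a - 1) * a ^ (n - (k : ℕ)) * (a + 1) else 0) → ZMod (q (k : ℕ))) //
        p • x = 0} =
      p ^ (if (n + 1) % t = 0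
        then d * (d-2) * (∑ m ∈ (Finset.range (n-1)).filter (fun m => m % t = n % t),
            (d-1) ^ m) + (d - 1)
        else d * (d-2) * ∑ m ∈ (Finset.range (n-1)).filter (fun m => m % t = n % t),
            (d-1) ^ m) := by
  obtain ⟨ht0, htq, htmin⟩ := ht
  have ha2 : 2 ≤ a := by omega
  have hpa : ¬ p ∣ a := fun hdvd => hpd (by rw [hA] at hdvd; exact Dvd.dvd.mul_left hdvd d)
  -- key additivity
  have qadd : ∀ j k, q (j + k) = q j + a ^ j * q k := by
    intro j k
    rw [hq, hq, hq, Finset.sum_range_add, Finset.mul_sum]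
    congr 1
    exact Finset.sum_congr rfl fun i _ => (pow_add a j i)
  have qts : ∀ s, p ∣ q (t * s) := by
    intro s
    induction s with
    | zero => simp [hq]
    | succ s ih =>
      rw [Nat.mul_succ, qadd]
      exact Nat.dvd_add ih (Dvd.dvd.mul_left htq _)
  have qiff : ∀ k, p ∣ q k ↔ k % t = 0 := by
    intro k
    constructor
    · intro hk
      by_contra hmod
      have hdecomp := (Nat.div_add_mod k t).symm
      rw [hdecomp, qadd] at hk
      have h2 : p ∣ a ^ (t * (k / t)) * q (k % t) :=
        (Nat.dvd_add_right (qts (k / t))).mp hk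
      have h3 : p ∣ q (k % t) := by
        rcases (Nat.Prime.dvd_mul hp).mp h2 with h | h
        · exact absurd (hp.dvd_of_dvd_pow h) hpa
        · exact h
      have := htmin _ (Nat.pos_of_ne_zero hmod) h3
      exact absurd (Nat.mod_lt k ht0) (not_lt.mpr this)
    · intro hk
      have : k = t * (k / t) := (Nat.mul_div_cancel' (Nat.dvd_of_mod_eq_zero hk)).symm
      rw [this]; exact qts _
  -- positivity of q
  have qpos : ∀ k, 1 ≤ k → 0 < q k := by
    intro k hk
    rw [hq]
    exact Finset.sum_pos (fun i _ => pow_pos (by omega) i) (Finset.nonempty_range_iff.mpr (by omega))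
  -- compute the cardinality
  rw [Nat.card_congr (torsProd p), Nat.card_prod,
    Nat.card_congr (torsPi p), Nat.card_pi,
    Nat.card_congr (torsPi p), Nat.card_pi]
  have h1 : (∏ _x : Fin a, Nat.card {x : ZMod (q (n+1)) // p • x = 0}) =
      p ^ (if (n + 1) % t = 0 then a else 0) := by
    rw [Finset.prod_const, Finset.card_univ, Fintype.card_fin,
      tors_card p _ hp (qpos (n+1) (by omega))]
    simp only [qiff]
    by_cases h : (n + 1) % t = 0
    · rw [if_pos h, if_pos h]
    · rw [if_neg h, if_neg h, one_pow, pow_zero]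
  have hterm : ∀ k : ℕ, k ≤ n →
      Nat.card {x : Fin (if 2 ≤ k then (a - 1) * a ^ (n - k) * (a + 1) else 0) →
          ZMod (q k) // p • x = 0} =
        p ^ (if k % t = 0 ∧ 2 ≤ k then (a - 1) * a ^ (n - k) * (a + 1) else 0) := by
    intro k hk
    rw [Nat.card_congr (torsPi p), Nat.card_pi, Finset.prod_const, Finset.card_univ,
      Fintype.card_fin]
    by_cases h2 : 2 ≤ k
    · rw [if_pos h2, tors_card p _ hp (qpos k (by omega))]
      simp only [qiff]
      by_cases h3 : k % t = 0
      · rw [if_pos h3, if_pos ⟨h3, h2⟩]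
      · rw [if_neg h3, if_neg (by tauto), one_pow, pow_zero]
    · rw [if_neg h2, if_neg (by tauto), pow_zero, pow_zero]
  have h2 : (∏ k : Fin (n+1), Nat.card {x : Fin (if 2 ≤ (k : ℕ)
        then (a - 1) * a ^ (n - (k : ℕ)) * (a + 1) else 0) →
          ZMod (q (k : ℕ)) // p • x = 0}) =
      p ^ (∑ k ∈ Finset.range (n+1),
        if k % t = 0 ∧ 2 ≤ k then (a - 1) * a ^ (n - k) * (a + 1) else 0) := by
    rw [Fin.prod_univ_eq_prod_range
      (fun k => Nat.card {x : Fin (if 2 ≤ k then (a - 1) * a ^ (n - k) * (a + 1) else 0) →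
          ZMod (q k) // p • x = 0})]
    rw [← Finset.prod_pow_eq_pow_sum]
    exact Finset.prod_congr rfl fun k hk => hterm k (by
      have := Finset.mem_range.mp hk; omega)
  rw [h1, h2, ← pow_add]
  congr 1
  -- now pure arithmetic on exponents
  have hsum : (∑ k ∈ Finset.range (n+1),
      if k % t = 0 ∧ 2 ≤ k then (a - 1) * a ^ (n - k) * (a + 1) else 0) =
      d * (d-2) * ∑ m ∈ (Finset.range (n-1)).filter (fun m => m % t = n % t),
        (d-1) ^ m := by
    rw [← Finset.sum_range_reflect]
    have hcong : ∀ j ∈ Finset.range (n+1),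
        (if (n + 1 - 1 - j) % t = 0 ∧ 2 ≤ n + 1 - 1 - j then
          (a - 1) * a ^ (n - (n + 1 - 1 - j)) * (a + 1) else 0) =
        (if j < n - 1 ∧ j % t = n % t then d * (d-2) * (d-1) ^ j else 0) := by
      intro j hj
      have hjn : j ≤ n := by have := Finset.mem_range.mp hj; omega
      have hs : n + 1 - 1 - j = n - j := by omega
      rw [hs]
      have hmod : (n - j) % t = 0 ↔ j % t = n % t := by
        constructor
        · intro h
          obtain ⟨s, hsx⟩ := Nat.dvd_of_mod_eq_zero h
          have hns : n = j + t * s := by omega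
          rw [hns, Nat.add_mul_mod_self_left]
        · intro h
          exact Nat.sub_mod_eq_zero_of_mod_eq h.symm
      have hcond : ((n - j) % t = 0 ∧ 2 ≤ n - j) ↔ (j < n - 1 ∧ j % t = n % t) := by
        rw [hmod]
        constructor
        · rintro ⟨hx, hy⟩; exact ⟨by omega, hx⟩
        · rintro ⟨hx, hy⟩; exact ⟨hy, by omega⟩
      by_cases hc : j < n - 1 ∧ j % t = n % t
      · rw [if_pos (hcond.mpr hc), if_pos hc]
        have hnn : n - (n - j) = j := by omega
        rw [hnn, hA]
        have e1 : d - 1 - 1 = d - 2 := by omega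
        have e2 : d - 1 + 1 = d := by omega
        rw [e1, e2]; ring
      · rw [if_neg (fun hh => hc (hcond.mp hh)), if_neg hc]
    rw [Finset.sum_congr rfl hcong]
    rw [← Finset.sum_subset (Finset.range_subset_range.mpr (show n - 1 ≤ n + 1 by omega))
      (fun x _ hx => by
        rw [if_neg]
        intro hh
        exact hx (Finset.mem_range.mpr hh.1))]
    have hcong2 : ∀ j ∈ Finset.range (n-1),
        (if j < n - 1 ∧ j % t = n % t then d * (d-2) * (d-1) ^ j else 0) =
        (if j % t = n % t then d * (d-2) * (d-1) ^ j else 0) := by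
      intro j hj
      have hjlt := Finset.mem_range.mp hj
      by_cases hc : j % t = n % t
      · rw [if_pos ⟨hjlt, hc⟩, if_pos hc]
      · rw [if_neg (fun hh => hc hh.2), if_neg hc]
    rw [Finset.sum_congr rfl hcong2, ← Finset.sum_filter, Finset.mul_sum]
  rw [hsum]
  by_cases h : (n + 1) % t = 0
  · rw [if_pos h, if_pos h]; omega
  · rw [if_neg h, if_neg h]; omega
end

section
/- For integers $a \geq 2$ and $n \geq 2$: $q_n \cdot \prod_{k=2}^{n-1} q_k^{a^{n-1-k}(a-1)} = q_n \cdot \prod_{k=1}^{n-2} q_{k+1}^{a^{n-2-k}(a-1)}$, and moreover $(a+1) t_{n-1} - a\, t_{n-2}^{a}$ divides $t_n$ where $t_m = q_m \prod_{k=2}^{m-1} q_k^{a^{m-1-k}(a-1)}$; in fact $t_n = t_{n-1}^{a-1}((a+1)t_{n-1} - a t_{n-2}^a)$ for $n \geq 4$. -/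
/-- Reindexing of the closed-form spanning tree count, divisibility, and the recurrence
`t n = t (n-1)^(a-1) ((a+1) t (n-1) - a t (n-2)^a)`. -/
theorem stmt_11 (a : ℕ) (ha : 2 ≤ a) (q : ℕ → ℤ) (t : ℕ → ℤ)
    (hq : ∀ k, q k = ∑ i ∈ Finset.range k, (a : ℤ) ^ i)
    (ht : ∀ m, t m = q m * ∏ k ∈ Finset.Icc 2 (m-1), q k ^ (a ^ (m-1-k) * (a-1))) :
    (∀ n, 2 ≤ n →
      q n * ∏ k ∈ Finset.Icc 2 (n-1), q k ^ (a ^ (n-1-k) * (a-1)) =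
      q n * ∏ k ∈ Finset.Icc 1 (n-2), q (k+1) ^ (a ^ (n-2-k) * (a-1))) ∧
    (∀ n, 4 ≤ n →
      (((a : ℤ)+1) * t (n-1) - (a : ℤ) * t (n-2) ^ a) ∣ t n ∧
      t n = t (n-1) ^ (a-1) * (((a : ℤ)+1) * t (n-1) - (a : ℤ) * t (n-2) ^ a)) := by
  have hqstep : ∀ m, q (m+1) = q m + (a:ℤ)^m := by
    intro m; rw [hq, hq, Finset.sum_range_succ]
  have hP : ∀ m, 2 ≤ m →
      (∏ k ∈ Finset.Icc 2 m, q k ^ (a ^ (m-k) * (a-1)))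
        = q m ^ (a-1) * (∏ k ∈ Finset.Icc 2 (m-1), q k ^ (a ^ (m-1-k) * (a-1))) ^ a := by
    intro m hm
    obtain ⟨j, rfl⟩ : ∃ j, m = j + 1 := ⟨m - 1, by omega⟩
    rw [Finset.prod_Icc_succ_top (by omega : 2 ≤ j + 1)]
    rw [show j + 1 - 1 = j by omega]
    rw [show j + 1 - (j + 1) = 0 by omega, pow_zero, one_mul]
    rw [← Finset.prod_pow]
    rw [Finset.prod_congr rfl (fun k hk => ?_), mul_comm]
    have hk' : k ≤ j := (Finset.mem_Icc.mp hk).2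
    rw [← pow_mul]
    congr 1
    rw [show j + 1 - k = (j - k) + 1 by omega, pow_succ]
    ring
  constructor
  · intro n hn
    congr 1
    rw [show Finset.Icc 2 (n-1) = Finset.Icc (1+1) ((n-2)+1) by congr 1; omega,
      ← Finset.map_add_right_Icc, Finset.prod_map]
    refine Finset.prod_congr rfl (fun k _ => ?_)
    simp only [addRightEmbedding_apply]
    rw [show n - 1 - (k + 1) = n - 2 - k by omega]
  · intro n hn
    -- abbreviations
    have hTn : t n = q n * (q (n-1) ^ (a-1) *
        (∏ k ∈ Finset.Icc 2 (n-2), q k ^ (a ^ (n-2-k) * (a-1))) ^ a) := by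
      rw [ht n]
      have := hP (n-1) (by omega)
      rw [show n - 1 - 1 = n - 2 by omega] at this
      rw [this]
    have hA : (∏ k ∈ Finset.Icc 2 (n-2), q k ^ (a ^ (n-2-k) * (a-1)))
        = q (n-2) ^ (a-1) * (∏ k ∈ Finset.Icc 2 (n-3), q k ^ (a ^ (n-3-k) * (a-1))) ^ a := by
      have := hP (n-2) (by omega)
      rw [show n - 2 - 1 = n - 3 by omega] at this
      exact this
    have ht1 : t (n-1) = q (n-1) * ∏ k ∈ Finset.Icc 2 (n-2), q k ^ (a ^ (n-2-k) * (a-1)) := by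
      rw [ht (n-1), show n - 1 - 1 = n - 2 by omega]
    have ht2 : t (n-2) = q (n-2) * ∏ k ∈ Finset.Icc 2 (n-3), q k ^ (a ^ (n-3-k) * (a-1)) := by
      rw [ht (n-2), show n - 2 - 1 = n - 3 by omega]
    have hsub : ∀ z : ℤ, z ^ a = z ^ (a-1) * z := by
      intro z
      conv_lhs => rw [show a = (a-1) + 1 by omega, pow_succ]
    have hqn : q n = ((a:ℤ)+1) * q (n-1) - (a:ℤ) * q (n-2) := by
      have e1 : q n = q (n-1) + (a:ℤ)^(n-1) := by
        have := hqstep (n-1); rwa [show n - 1 + 1 = n by omega] at this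
      have e2 : q (n-1) = q (n-2) + (a:ℤ)^(n-2) := by
        have := hqstep (n-2); rwa [show n - 2 + 1 = n - 1 by omega] at this
      have e3 : (a:ℤ)^(n-1) = (a:ℤ) * (a:ℤ)^(n-2) := by
        rw [show n - 1 = (n-2) + 1 by omega, pow_succ]; ring
      rw [e1, e2, e3]; ring
    set A := ∏ k ∈ Finset.Icc 2 (n-2), q k ^ (a ^ (n-2-k) * (a-1)) with hAdef
    set B := ∏ k ∈ Finset.Icc 2 (n-3), q k ^ (a ^ (n-3-k) * (a-1)) with hBdef
    have ht2a : t (n-2) ^ a = q (n-2) * A := by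
      rw [ht2, mul_pow, hsub (q (n-2)), hA]; ring
    have key : t n = t (n-1) ^ (a-1) * (((a:ℤ)+1) * t (n-1) - (a:ℤ) * t (n-2) ^ a) := by
      rw [ht2a, hTn, ht1, mul_pow, hsub A]
      linear_combination (q (n-1) ^ (a-1) * A ^ (a-1) * A) * hqn
    exact ⟨⟨t (n-1) ^ (a-1), by rw [key]; ring⟩, key⟩
end
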